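/- For all n ≥ 0 and N ≥ 0, the sum of 4N+2 consecutive Fibonacci numbers satisfies ∑_{i=0}^{4N+1} F(n+i) = L(2N+1) · F(n+2N+2). -/
import Mathlib

open Nat

lemma cassini_int : ∀ k : ℕ, (Nat.fib (k+1) : ℤ)^2 - Nat.fib k * Nat.fib (k+2) = (-1)^k := by
  intro k
  induction k with
  | zero => simp
  | succ m ih =>
    have h := Nat.fib_add_two (n := m+1)
    have h2 := Nat.fib_add_two (n := m)
    push_cast [h, h2] at *
    ring_nf at ih ⊢
    linarith

lemma fib_sum_shift (n k : ℕ) :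
    (∑ i ∈ Finset.range k, Nat.fib (n + i)) + Nat.fib (n+1) = Nat.fib (n + k + 1) := by
  induction k with
  | zero => simp
  | succ m ih =>
    rw [Finset.sum_range_succ]
    have : n + (m+1) + 1 = (n + m) + 2 := by ring
    rw [this, Nat.fib_add_two]
    omega

lemma key (n N : ℕ) :
    Nat.fib (n + (4*N+2) + 1) =
      (Nat.fib (2*N) + Nat.fib (2*N+2)) * Nat.fib (n + 2*N + 2) + Nat.fib (n+1) := by
  have h1 := Nat.fib_add (n + 2*N + 1) (2*N + 1)
  have h2 := Nat.fib_add n (2*N)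
  have h3 := Nat.fib_add n (2*N + 1)
  have hc := cassini_int (2*N)
  have hpow : ((-1 : ℤ))^(2*N) = 1 := by
    rw [pow_mul]; norm_num
  rw [hpow] at hc
  have e1 : n + (4*N+2) + 1 = (n + 2*N + 1) + (2*N+1) + 1 := by ring
  rw [e1, h1]
  have e2 : n + 2*N + 1 = n + 2*N + 1 := rfl
  have hq := Nat.fib_add_two (n := 2*N)
  -- work over ℤ
  have : (Nat.fib (n + 2*N + 1) * Nat.fib (2*N+1)
      + Nat.fib (n + 2*N + 1 + 1) * Nat.fib (2*N+1+1) : ℤ)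
      = (Nat.fib (2*N) + Nat.fib (2*N+2)) * Nat.fib (n + 2*N + 2) + Nat.fib (n+1) := by
    have e3 : n + 2*N + 1 + 1 = n + (2*N+1) + 1 := by ring
    have e4 : n + 2*N + 1 = n + 2*N + 1 := rfl
    have h2' : Nat.fib (n + 2*N + 1) = Nat.fib n * Nat.fib (2*N) + Nat.fib (n+1) * Nat.fib (2*N+1) := h2
    have h3' : Nat.fib (n + 2*N + 2) = Nat.fib n * Nat.fib (2*N+1) + Nat.fib (n+1) * Nat.fib (2*N+2) := by
      have : n + 2*N + 2 = n + (2*N+1) + 1 := by ring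
      rw [this, h3]
    rw [e3]
    have h3'' : Nat.fib (n + (2*N+1) + 1) = Nat.fib n * Nat.fib (2*N+1) + Nat.fib (n+1) * Nat.fib (2*N+2) := h3
    push_cast [h2', h3'', hq]
    push_cast [hq] at hc
    linear_combination (Nat.fib (n+1) : ℤ) * hc
  exact_mod_cast this

theorem fib_sum_4N_plus_2 (F L : ℕ → ℕ)
    (hF0 : F 0 = 0) (hF1 : F 1 = 1)
    (hFrec : ∀ n, F (n + 2) = F (n + 1) + F n)
    (hL0 : L 0 = 2) (hL1 : L 1 = 1)
    (hLrec : ∀ n, L (n + 2) = L (n + 1) + L n)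
    (n N : ℕ) :
    (∑ i ∈ Finset.range (4 * N + 2), F (n + i)) = L (2 * N + 1) * F (n + 2 * N + 2) := by
  -- F = fib
  have hF : ∀ k, F k = Nat.fib k := by
    intro k
    induction k using Nat.strong_induction_on with
    | _ k ih =>
      match k with
      | 0 => simpa using hF0
      | 1 => simpa using hF1
      | (m+2) =>
        rw [hFrec m, Nat.fib_add_two, ih m (by omega), ih (m+1) (by omega)]
        ring
  -- L (k+1) = fib k + fib (k+2)
  have hL : ∀ k, L (k+1) = Nat.fib k + Nat.fib (k+2) := by
    intro k
    induction k using Nat.strong_induction_on with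
    | _ k ih =>
      match k with
      | 0 => simpa [hL1] using hL1
      | 1 => rw [hLrec 0, hL0, hL1]; decide
      | (m+2) =>
        rw [hLrec (m+1), ih m (by omega), ih (m+1) (by omega)]
        simp only [show m+2+2 = m+2+2 from rfl, Nat.fib_add_two (n := m+2),
          Nat.fib_add_two (n := m+1), Nat.fib_add_two (n := m)]
        omega
  simp only [hF, hL]
  have hs := fib_sum_shift n (4*N+2)
  have hk := key n N
  omega
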